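/- Let n, d ≥ 1 and let f ∈ ℝ[x₁,…,xₙ] be a form of degree 2d. Let W ⊆ ℝ[x₁,…,xₙ]_d be an r-dimensional linear subspace admitting a basis p₁,…,p_r such that f = Σᵢ₌₁ʳ pᵢ². Then the Gram spectrahedron Gram(f) has a face F such that every point of the relative interior of F has image equal to W, and dim F = r(r+1)/2 − dim W². -/

import Mathlib

open MvPolynomial Matrix

/-- From a relative-interior point one can move slightly past it away from any point of the set. -/
lemma ri_extend {E : Type*} [AddCommGroup E] [Module ℝ E] [TopologicalSpace E]
    [ContinuousAdd E] [ContinuousSMul ℝ E]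
    {s : Set E} {x y : E} (hx : x ∈ intrinsicInterior ℝ s) (hy : y ∈ s) :
    ∃ t : ℝ, 0 < t ∧ x + t • (x - y) ∈ s := by
  obtain ⟨x', hx', hxx⟩ := hx
  have hxs : x ∈ affineSpan ℝ s := hxx ▸ x'.2
  have hys : y ∈ affineSpan ℝ s := mem_affineSpan ℝ hy
  have hmem : ∀ t : ℝ, x + t • (x - y) ∈ affineSpan ℝ s := by
    intro t
    have := AffineSubspace.smul_vsub_vadd_mem (affineSpan ℝ s) t hxs hys hxs
    simpa [vsub_eq_sub, vadd_eq_add, add_comm] using this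
  set γ : ℝ → affineSpan ℝ s := fun t => ⟨x + t • (x - y), hmem t⟩ with hγ
  have hcont : Continuous γ := by
    apply Continuous.subtype_mk
    continuity
  have h0 : γ 0 ∈ interior ((↑) ⁻¹' s : Set <| affineSpan ℝ s) := by
    have : γ 0 = x' := by
      apply Subtype.ext
      simp [hγ, hxx]
    rw [this]; exact hx'
  have hopen : IsOpen (γ ⁻¹' interior ((↑) ⁻¹' s : Set <| affineSpan ℝ s)) :=
    isOpen_interior.preimage hcont
  obtain ⟨ε, hε, hball⟩ := Metric.isOpen_iff.1 hopen 0 h0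
  refine ⟨ε / 2, by positivity, ?_⟩
  have : γ (ε / 2) ∈ interior ((↑) ⁻¹' s : Set <| affineSpan ℝ s) := by
    apply hball
    simp only [Metric.mem_ball, dist_zero_right, Real.norm_eq_abs]
    rw [abs_of_pos (by positivity)]
    linarith
  exact interior_subset (s := ((↑) ⁻¹' s : Set <| affineSpan ℝ s)) this

noncomputable def gramPoly {σ ι : Type*} [Fintype ι] (m : ι → MvPolynomial σ ℝ) :
    Matrix ι ι ℝ →ₗ[ℝ] MvPolynomial σ ℝ where
  toFun G := m ⬝ᵥ ((G.map C) *ᵥ m)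
  map_add' G H := by
    ext t
    simp [dotProduct, mulVec, Finset.mul_sum, add_mul, mul_add, Finset.sum_add_distrib]
  map_smul' a G := by
    ext t
    simp [dotProduct, mulVec, Finset.mul_sum, Finset.smul_sum, smul_eq_C_mul, mul_assoc,
      mul_left_comm (C a)]

lemma gramPoly_apply {σ ι : Type*} [Fintype ι] (m : ι → MvPolynomial σ ℝ)
    (G : Matrix ι ι ℝ) :
    gramPoly m G = ∑ i, ∑ j, C (G i j) * (m i * m j) := by
  simp only [gramPoly, LinearMap.coe_mk, AddHom.coe_mk, dotProduct, mulVec, map_apply,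
    Finset.mul_sum]
  refine Finset.sum_congr rfl fun i _ => Finset.sum_congr rfl fun j _ => by ring

lemma gramPoly_conj {σ ι κ : Type*} [Fintype ι] [Fintype κ]
    (m : ι → MvPolynomial σ ℝ) (p : κ → MvPolynomial σ ℝ)
    (P : Matrix κ ι ℝ) (hP : ∀ k, p k = ∑ i, P k i • m i)
    (A : Matrix κ κ ℝ) :
    gramPoly m (Pᵀ * A * P) = gramPoly p A := by
  have hPm : (P.map C) *ᵥ m = p := by
    funext k
    simp [mulVec, dotProduct, hP k, smul_eq_C_mul]
  simp only [gramPoly, LinearMap.coe_mk, AddHom.coe_mk]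
  rw [Matrix.map_mul (f := (C : ℝ →+* MvPolynomial σ ℝ)),
    Matrix.map_mul (f := (C : ℝ →+* MvPolynomial σ ℝ)),
    Matrix.transpose_map, ← Matrix.mulVec_mulVec, ← Matrix.mulVec_mulVec,
    Matrix.dotProduct_mulVec, Matrix.vecMul_transpose, hPm]

noncomputable def vecPoly {σ ι : Type*} [Fintype ι] (m : ι → MvPolynomial σ ℝ) :
    (ι → ℝ) →ₗ[ℝ] MvPolynomial σ ℝ where
  toFun c := ∑ i, c i • m i
  map_add' c c' := by simp [add_smul, Finset.sum_add_distrib]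
  map_smul' a c := by simp [Finset.smul_sum, smul_smul]

lemma vecPoly_range {σ ι : Type*} [Fintype ι] [DecidableEq ι] (m : ι → MvPolynomial σ ℝ) :
    LinearMap.range (vecPoly m) = Submodule.span ℝ (Set.range m) := by
  apply le_antisymm
  · rintro q ⟨c, rfl⟩
    exact Submodule.sum_mem _ fun i _ => Submodule.smul_mem _ _
      (Submodule.subset_span ⟨i, rfl⟩)
  · rw [Submodule.span_le]
    rintro q ⟨i, rfl⟩
    exact ⟨Pi.single i 1, by simp [vecPoly, Pi.single_apply, ite_smul, Finset.sum_ite_eq']⟩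

lemma vecPoly_comp {σ ι κ : Type*} [Fintype ι] [Fintype κ]
    (m : ι → MvPolynomial σ ℝ) (p : κ → MvPolynomial σ ℝ)
    (P : Matrix κ ι ℝ) (hP : ∀ k, p k = ∑ i, P k i • m i) (y : κ → ℝ) :
    vecPoly m (Pᵀ *ᵥ y) = vecPoly p y := by
  simp only [vecPoly, LinearMap.coe_mk, AddHom.coe_mk, mulVec, dotProduct, transpose_apply]
  simp only [hP, Finset.smul_sum, smul_smul, Finset.sum_smul]
  rw [Finset.sum_comm]
  exact Finset.sum_congr rfl fun k _ => Finset.sum_congr rfl fun i _ => by rw [mul_comm]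

lemma matrix_eq_zero_of_mulVec {ι : Type*} [Fintype ι] [DecidableEq ι]
    (M : Matrix ι ι ℝ) (h : ∀ v, M *ᵥ v = 0) : M = 0 := by
  ext i j
  have := congrFun (h (Pi.single j 1)) i
  simpa [Matrix.mulVec_single] using this

lemma posSemidef_combo {ι : Type*} [Fintype ι] {x y : Matrix ι ι ℝ}
    (hx : x.PosSemidef) (hy : y.PosSemidef) {a b : ℝ} (ha : 0 ≤ a) (hb : 0 ≤ b) :
    (a • x + b • y).PosSemidef := by
  refine PosSemidef.of_dotProduct_mulVec_nonneg ?_ ?_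
  · simp only [Matrix.IsHermitian, conjTranspose_add, conjTranspose_smul]
    rw [hx.1, hy.1]
    simp
  · intro v
    have h1 := hx.dotProduct_mulVec_nonneg v
    have h2 := hy.dotProduct_mulVec_nonneg v
    simp only [add_mulVec, smul_mulVec, dotProduct_add, dotProduct_smul] at *
    have : (0:ℝ) ≤ a * (star v ⬝ᵥ x *ᵥ v) + b * (star v ⬝ᵥ y *ᵥ v) := by positivity
    simpa using this

def symSubmodule (r : ℕ) : Submodule ℝ (Matrix (Fin r) (Fin r) ℝ) where
  carrier := {A | Aᵀ = A}
  add_mem' ha hb := by simp_all [Matrix.transpose_add]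
  zero_mem' := by simp
  smul_mem' c A hA := by simp_all [Matrix.transpose_smul]

noncomputable def symEquiv (r : ℕ) :
    symSubmodule r ≃ₗ[ℝ] ({ q : Fin r × Fin r // q.1 ≤ q.2 } → ℝ) where
  toFun A x := A.1 x.1.1 x.1.2
  map_add' A B := by funext x; simp
  map_smul' c A := by funext x; simp
  invFun g := ⟨Matrix.of fun i j =>
      if h : i ≤ j then g ⟨(i,j), h⟩ else g ⟨(j,i), le_of_not_ge h⟩, by
    ext i j
    simp only [transpose_apply, of_apply]
    rcases le_total i j with h | h
    · rcases eq_or_lt_of_le h with rfl | hlt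
      · simp
      · rw [dif_neg (not_le_of_gt hlt), dif_pos h]
    · rcases eq_or_lt_of_le h with rfl | hlt
      · simp
      · rw [dif_pos h, dif_neg (not_le_of_gt hlt)]⟩
  left_inv A := by
    apply Subtype.ext
    ext i j
    simp only [of_apply]
    split_ifs with h
    · rfl
    · conv_rhs => rw [← A.2]
      rfl
  right_inv g := by
    funext x
    simp only [of_apply, dif_pos x.2]

lemma finrank_symSubmodule (r : ℕ) :
    Module.finrank ℝ (symSubmodule r) = r * (r + 1) / 2 := by
  rw [(symEquiv r).finrank_eq, Module.finrank_fintype_fun_eq_card,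
    ← Fintype.card_congr (Sym2.sortEquiv (α := Fin r)), Sym2.card]
  simp [Nat.choose_two_right, Fintype.card_fin, Nat.mul_comm]

/-- A face of a convex set `S`: a convex subset `F ⊆ S` such that whenever a point
of `F` lies in the open segment between two points of `S`, both endpoints lie in `F`. -/
def IsFace {E : Type*} [AddCommGroup E] [Module ℝ E] (S F : Set E) : Prop :=
  F ⊆ S ∧ Convex ℝ F ∧ ∀ x ∈ S, ∀ y ∈ S, ∀ t : ℝ, 0 < t → t < 1 →
    t • x + (1 - t) • y ∈ F → x ∈ F ∧ y ∈ F

set_option maxHeartbeats 2000000 in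
set_option synthInstance.maxHeartbeats 400000 in
/-- If `W ⊆ ℝ[x₁,…,xₙ]_d` is an `r`-dimensional subspace with a basis `p₁,…,p_r`
such that `f = Σ pᵢ²`, then `Gram(f)` has a face `F` all of whose relative interior
points have image `W`, and `dim F = r(r+1)/2 - dim W²`. -/
theorem face_with_prescribed_image
    (n d N : ℕ) (hn : 1 ≤ n) (hd : 1 ≤ d)
    -- `m` enumerates the monomial basis of `ℝ[x₁,…,xₙ]_d`
    (m : Fin N → MvPolynomial (Fin n) ℝ)
    (hm_inj : Function.Injective m)
    (hm_mono : ∀ k, ∃ s : Fin n →₀ ℕ,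
      (s.sum fun _ e => e) = d ∧ m k = monomial s (1 : ℝ))
    (hm_surj : ∀ s : Fin n →₀ ℕ, (s.sum fun _ e => e) = d →
      ∃ k, m k = monomial s (1 : ℝ))
    -- `f` is a form of degree `2d`
    (f : MvPolynomial (Fin n) ℝ) (hf : f.IsHomogeneous (2 * d))
    -- `W` is an `r`-dimensional subspace of `ℝ[x₁,…,xₙ]_d` with a basis
    -- `p₁,…,p_r` such that `f = Σ pᵢ²`
    (r : ℕ) (W : Submodule ℝ (MvPolynomial (Fin n) ℝ))
    (hW_hom : ∀ p ∈ W, p.IsHomogeneous d)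
    (p : Fin r → MvPolynomial (Fin n) ℝ)
    (hp_li : LinearIndependent ℝ p)
    (hp_span : Submodule.span ℝ (Set.range p) = W)
    (hfp : f = ∑ i, p i ^ 2)
    -- the Gram spectrahedron of `f`
    (Gram : Set (Matrix (Fin N) (Fin N) ℝ))
    (hGram : Gram = {G | G.PosSemidef ∧
      (∑ i, ∑ j, MvPolynomial.C (G i j) * (m i * m j)) = f})
    -- `W²` is the span of all products of two elements of `W`
    (W2 : Submodule ℝ (MvPolynomial (Fin n) ℝ))
    (hW2 : W2 = Submodule.span ℝ {g | ∃ u ∈ W, ∃ v ∈ W, g = u * v}) :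
    ∃ F : Set (Matrix (Fin N) (Fin N) ℝ), IsFace Gram F ∧
      (∀ θ ∈ intrinsicInterior ℝ F,
        Submodule.span ℝ
          {q | ∃ c : Fin N → ℝ, q = ∑ i, ∑ j, (θ i j * c j) • m i} = W) ∧
      Module.finrank ℝ (vectorSpan ℝ F) =
        r * (r + 1) / 2 - Module.finrank ℝ W2 := by
  classical
  obtain ⟨s, hs⟩ : ∃ s : Fin N → (Fin n →₀ ℕ), ∀ k,
      ((s k).sum fun _ e => e) = d ∧ m k = monomial (s k) (1:ℝ) :=
    ⟨fun k => (hm_mono k).choose, fun k => (hm_mono k).choose_spec⟩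
  have hs_inj : Function.Injective s := fun i j hij => hm_inj (by rw [(hs i).2, (hs j).2, hij])
  have hpW : ∀ k, p k ∈ W := fun k => hp_span ▸ Submodule.subset_span ⟨k, rfl⟩
  have hexp : ∀ q : MvPolynomial (Fin n) ℝ, q.IsHomogeneous d →
      q = ∑ i, coeff (s i) q • m i := by
    intro q hq
    apply MvPolynomial.ext; intro t
    rw [MvPolynomial.coeff_sum]
    simp only [MvPolynomial.coeff_smul, (hs _).2, MvPolynomial.coeff_monomial, smul_eq_mul,
      mul_ite, mul_one, mul_zero]
    by_cases ht : ∃ i, s i = t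
    · obtain ⟨i0, rfl⟩ := ht
      rw [Finset.sum_eq_single i0]
      · simp
      · intro j _ hj
        rw [if_neg fun h => hj (hs_inj h)]
      · intro h; exact absurd (Finset.mem_univ i0) h
    · push_neg at ht
      have hq0 : coeff t q = 0 := by
        by_contra h
        have hdeg : (t.sum fun _ e => e) = d := by
          by_contra hd'
          exact h (hq.coeff_eq_zero hd')
        obtain ⟨i, hi⟩ := hm_surj t hdeg
        exact ht i (MvPolynomial.monomial_left_injective one_ne_zero ((hs i).2.symm.trans hi))
      rw [hq0, Finset.sum_eq_zero]
      intro j _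
      rw [if_neg (ht j)]
  set P : Matrix (Fin r) (Fin N) ℝ := Matrix.of fun k i => coeff (s i) (p k) with hPdef
  have hP : ∀ k, p k = ∑ i, P k i • m i := fun k => hexp _ (hW_hom _ (hpW k))
  have hGram' : Gram = {G | G.PosSemidef ∧ gramPoly m G = f} := by
    rw [hGram]; ext G; simp only [Set.mem_setOf_eq, gramPoly_apply]
  have hconj : ∀ A, gramPoly m (Pᵀ * A * P) = gramPoly p A := gramPoly_conj m p P hP
  have hone : gramPoly p 1 = f := by
    rw [gramPoly_apply, hfp]
    refine Finset.sum_congr rfl fun k _ => ?_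
    rw [Finset.sum_eq_single k]
    · simp [Matrix.one_apply, sq]
    · intro l _ hl
      simp [Matrix.one_apply, Ne.symm hl]
    · intro h; exact absurd (Finset.mem_univ k) h
  -- invertibility of P * Pᵀ
  have hTinj : ∀ y : Fin r → ℝ, Pᵀ *ᵥ y = 0 → y = 0 := by
    intro y hy
    have h0 : vecPoly p y = 0 := by
      rw [← vecPoly_comp m p P hP, hy, map_zero]
    have hz : ∑ k, y k • p k = 0 := by
      simpa [vecPoly] using h0
    funext k
    exact Fintype.linearIndependent_iff.1 hp_li y hz k
  have hPPT : (P * Pᵀ).PosDef := by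
    refine PosDef.of_dotProduct_mulVec_pos ?_ ?_
    · rw [Matrix.IsHermitian, conjTranspose_eq_transpose_of_trivial, transpose_mul,
        transpose_transpose]
    · intro x hx
      have h1 : star x ⬝ᵥ (P * Pᵀ) *ᵥ x = (Pᵀ *ᵥ x) ⬝ᵥ (Pᵀ *ᵥ x) := by
        rw [star_trivial, ← Matrix.mulVec_mulVec, Matrix.dotProduct_mulVec,
          ← Matrix.mulVec_transpose]
      rw [h1]
      rcases eq_or_ne (Pᵀ *ᵥ x) 0 with h | h
      · exact absurd (hTinj x h) hx
      · have hnonneg : 0 ≤ (Pᵀ *ᵥ x) ⬝ᵥ (Pᵀ *ᵥ x) :=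
          Finset.sum_nonneg fun i _ => mul_self_nonneg _
        exact lt_of_le_of_ne hnonneg (Ne.symm fun h0 => h (dotProduct_self_eq_zero.1 h0))
  have hdet : IsUnit (P * Pᵀ).det :=
    isUnit_iff_ne_zero.2 (ne_of_gt hPPT.det_pos)
  set S : Matrix (Fin r) (Fin r) ℝ := (P * Pᵀ)⁻¹ with hSdef
  have hS1 : S * (P * Pᵀ) = 1 := Matrix.nonsing_inv_mul _ hdet
  have hS2 : (P * Pᵀ) * S = 1 := Matrix.mul_nonsing_inv _ hdet
  have hSsym : Sᵀ = S := by
    rw [hSdef, Matrix.transpose_nonsing_inv, transpose_mul, transpose_transpose]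
  have hrec : ∀ A : Matrix (Fin r) (Fin r) ℝ, (S * P) * (Pᵀ * A * P) * (Pᵀ * S) = A := by
    intro A
    have : (S * P) * (Pᵀ * A * P) * (Pᵀ * S) = (S * (P * Pᵀ)) * A * ((P * Pᵀ) * S) := by
      simp only [Matrix.mul_assoc]
    rw [this, hS1, hS2, one_mul, mul_one]
  have hcong_inj : ∀ A B : Matrix (Fin r) (Fin r) ℝ, Pᵀ * A * P = Pᵀ * B * P → A = B := by
    intro A B h
    rw [← hrec A, h, hrec B]
  have hPH : (Pᵀ)ᴴ = P := by
    rw [conjTranspose_eq_transpose_of_trivial, transpose_transpose]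
  -- the face
  set F : Set (Matrix (Fin N) (Fin N) ℝ) :=
    {G | G ∈ Gram ∧ ∃ A : Matrix (Fin r) (Fin r) ℝ, G = Pᵀ * A * P} with hFdef
  -- key decomposition step for the face property
  have hkey : ∀ u ∈ Gram, ∀ w ∈ Gram, ∀ a b : ℝ, 0 < a → 0 < b →
      (∃ A : Matrix (Fin r) (Fin r) ℝ, a • u + b • w = Pᵀ * A * P) → ∃ B : Matrix (Fin r) (Fin r) ℝ, u = Pᵀ * B * P := by
    rw [hGram']
    rintro u ⟨huPSD, -⟩ w ⟨hwPSD, -⟩ a b ha hb ⟨A, hA⟩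
    have step1 : ∀ v : Fin N → ℝ, P *ᵥ v = 0 → u *ᵥ v = 0 := by
      intro v hv
      have hz : v ⬝ᵥ (a • u + b • w) *ᵥ v = 0 := by
        rw [hA, ← Matrix.mulVec_mulVec, ← Matrix.mulVec_mulVec, hv, Matrix.mulVec_zero,
          Matrix.mulVec_zero, dotProduct_zero]
      have hexp2 : a * (v ⬝ᵥ u *ᵥ v) + b * (v ⬝ᵥ w *ᵥ v) = 0 := by
        simpa [add_mulVec, smul_mulVec, dotProduct_add, dotProduct_smul] using hz
      have h1 : 0 ≤ v ⬝ᵥ u *ᵥ v := by simpa [star_trivial] using huPSD.dotProduct_mulVec_nonneg v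
      have h2 : 0 ≤ v ⬝ᵥ w *ᵥ v := by simpa [star_trivial] using hwPSD.dotProduct_mulVec_nonneg v
      have hq : v ⬝ᵥ u *ᵥ v = 0 := by nlinarith
      exact (huPSD.dotProduct_mulVec_zero_iff v).1 (by simpa [star_trivial] using hq)
    have step2 : u * (1 - Pᵀ * (S * P)) = 0 := by
      apply matrix_eq_zero_of_mulVec
      intro v
      rw [← Matrix.mulVec_mulVec]
      apply step1
      rw [Matrix.mulVec_mulVec]
      have hPP : P * (1 - Pᵀ * (S * P)) = 0 := by
        rw [Matrix.mul_sub, Matrix.mul_one]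
        have h3 : P * (Pᵀ * (S * P)) = ((P * Pᵀ) * S) * P := by simp only [Matrix.mul_assoc]
        rw [h3, hS2, Matrix.one_mul, sub_self]
      rw [hPP, Matrix.zero_mulVec]
    have husym : uᵀ = u := by
      have h4 := huPSD.1
      rwa [Matrix.IsHermitian, conjTranspose_eq_transpose_of_trivial] at h4
    have hu1 : u = u * (Pᵀ * (S * P)) := by
      rw [Matrix.mul_sub, Matrix.mul_one] at step2
      exact (sub_eq_zero.1 step2)
    have hPrT : (Pᵀ * (S * P))ᵀ = Pᵀ * (S * P) := by
      rw [transpose_mul, transpose_mul, transpose_transpose, hSsym]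
      simp only [Matrix.mul_assoc]
    have hu2 : u = (Pᵀ * (S * P)) * u := by
      have h5 := congrArg Matrix.transpose hu1
      rwa [transpose_mul, husym, hPrT] at h5
    refine ⟨S * P * u * (Pᵀ * S), ?_⟩
    calc u = (Pᵀ * (S * P)) * u := hu2
      _ = (Pᵀ * (S * P)) * (u * (Pᵀ * (S * P))) := by rw [← hu1]
      _ = Pᵀ * (S * P * u * (Pᵀ * S)) * P := by simp only [Matrix.mul_assoc]
  have hface : IsFace Gram F := by
    refine ⟨fun G hG => hG.1, ?_, ?_⟩
    · rintro x ⟨hxG, Ax, rfl⟩ y ⟨hyG, Ay, rfl⟩ a b ha hb hab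
      refine ⟨?_, ⟨a • Ax + b • Ay, ?_⟩⟩
      · rw [hGram'] at hxG hyG ⊢
        refine ⟨posSemidef_combo hxG.1 hyG.1 ha hb, ?_⟩
        rw [map_add, LinearMap.map_smul, LinearMap.map_smul, hxG.2, hyG.2, ← add_smul, hab,
          one_smul]
      · rw [Matrix.mul_add, Matrix.add_mul, Matrix.mul_smul, Matrix.smul_mul,
          Matrix.mul_smul, Matrix.smul_mul]
    · rintro x hx y hy t ht0 ht1 ⟨hzG, A, hA⟩
      refine ⟨⟨hx, hkey x hx y hy t (1 - t) ht0 (by linarith) ⟨A, hA⟩⟩,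
        ⟨hy, hkey y hy x hx (1 - t) t (by linarith) ht0 ⟨A, by rw [add_comm]; exact hA⟩⟩⟩
  have hG0 : Pᵀ * (1 : Matrix (Fin r) (Fin r) ℝ) * P ∈ F := by
    refine ⟨?_, ⟨1, rfl⟩⟩
    rw [hGram']
    refine ⟨?_, by rw [hconj, hone]⟩
    have h := (Matrix.PosSemidef.one (n := Fin r) (R := ℝ)).mul_mul_conjTranspose_same Pᵀ
    rwa [hPH] at h
  refine ⟨F, hface, ?_, ?_⟩
  · -- image claim
    intro θ hθ
    have hθF : θ ∈ F := intrinsicInterior_subset hθ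
    obtain ⟨hθG, A, hA⟩ := hθF
    have hG0PSD : (Pᵀ * (1 : Matrix (Fin r) (Fin r) ℝ) * P).PosSemidef := by
      have h := hG0.1; rw [hGram'] at h; exact h.1
    obtain ⟨t, ht, hz⟩ := ri_extend hθ hG0
    have hzPSD : (θ + t • (θ - Pᵀ * (1 : Matrix (Fin r) (Fin r) ℝ) * P)).PosSemidef := by
      have h := hz.1; rw [hGram'] at h; exact h.1
    have hker1 : ∀ v, θ *ᵥ v = 0 → P *ᵥ v = 0 := by
      intro v hv
      have hq : v ⬝ᵥ θ *ᵥ v = 0 := by rw [hv, dotProduct_zero]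
      have hcomb : (1 + t) • θ
          = (θ + t • (θ - Pᵀ * (1 : Matrix (Fin r) (Fin r) ℝ) * P))
            + t • (Pᵀ * (1 : Matrix (Fin r) (Fin r) ℝ) * P) := by
        module
      have hdot : (1 + t) * (v ⬝ᵥ θ *ᵥ v)
          = v ⬝ᵥ (θ + t • (θ - Pᵀ * (1 : Matrix (Fin r) (Fin r) ℝ) * P)) *ᵥ v
            + t * (v ⬝ᵥ (Pᵀ * (1 : Matrix (Fin r) (Fin r) ℝ) * P) *ᵥ v) := by
        have h6 := congrArg (fun M : Matrix (Fin N) (Fin N) ℝ => v ⬝ᵥ M *ᵥ v) hcomb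
        simpa [smul_mulVec, dotProduct_smul, add_mulVec, dotProduct_add] using h6
      have hz0 : 0 ≤ v ⬝ᵥ (θ + t • (θ - Pᵀ * (1 : Matrix (Fin r) (Fin r) ℝ) * P)) *ᵥ v := by
        simpa [star_trivial] using hzPSD.dotProduct_mulVec_nonneg v
      have hG00 : 0 ≤ v ⬝ᵥ (Pᵀ * (1 : Matrix (Fin r) (Fin r) ℝ) * P) *ᵥ v := by
        simpa [star_trivial] using hG0PSD.dotProduct_mulVec_nonneg v
      have hq2 : v ⬝ᵥ (Pᵀ * (1 : Matrix (Fin r) (Fin r) ℝ) * P) *ᵥ v = 0 := by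
        rw [hq] at hdot; nlinarith
      have hq3 : (P *ᵥ v) ⬝ᵥ (P *ᵥ v) = 0 := by
        rw [← hq2, Matrix.mul_one, ← Matrix.mulVec_mulVec, Matrix.dotProduct_mulVec,
          ← Matrix.mulVec_transpose]
        exact dotProduct_comm _ _
      exact dotProduct_self_eq_zero.1 hq3
    have hker2 : ∀ v, P *ᵥ v = 0 → θ *ᵥ v = 0 := by
      intro v hv
      rw [hA, ← Matrix.mulVec_mulVec, ← Matrix.mulVec_mulVec, hv, Matrix.mulVec_zero,
        Matrix.mulVec_zero]
    have hkerEq : LinearMap.ker θ.mulVecLin = LinearMap.ker P.mulVecLin := by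
      ext v
      simp only [LinearMap.mem_ker, Matrix.mulVecLin_apply]
      exact ⟨hker1 v, hker2 v⟩
    have hrange_le : LinearMap.range θ.mulVecLin ≤ LinearMap.range (Pᵀ).mulVecLin := by
      rintro x ⟨v, rfl⟩
      refine ⟨(A * P) *ᵥ v, ?_⟩
      rw [Matrix.mulVecLin_apply, Matrix.mulVecLin_apply, Matrix.mulVec_mulVec,
        ← Matrix.mul_assoc, ← hA]
    have e1 := LinearMap.finrank_range_add_finrank_ker θ.mulVecLin
    have e2 := LinearMap.finrank_range_add_finrank_ker P.mulVecLin
    have e3 := LinearMap.finrank_range_add_finrank_ker (Pᵀ).mulVecLin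
    rw [Module.finrank_fintype_fun_eq_card, Fintype.card_fin] at e1 e2 e3
    have hkerPT : LinearMap.ker (Pᵀ).mulVecLin = ⊥ := by
      rw [LinearMap.ker_eq_bot']
      intro v hv
      exact hTinj v (by rwa [Matrix.mulVecLin_apply] at hv)
    have hranP : LinearMap.range P.mulVecLin = ⊤ := by
      rw [LinearMap.range_eq_top]
      intro x
      refine ⟨Pᵀ *ᵥ (S *ᵥ x), ?_⟩
      rw [Matrix.mulVecLin_apply, Matrix.mulVec_mulVec, Matrix.mulVec_mulVec, hS2,
        Matrix.one_mulVec]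
    rw [hkerPT, finrank_bot] at e3
    rw [hranP, finrank_top, Module.finrank_fintype_fun_eq_card, Fintype.card_fin] at e2
    rw [hkerEq] at e1
    have hrange_eq : LinearMap.range θ.mulVecLin = LinearMap.range (Pᵀ).mulVecLin :=
      Submodule.eq_of_le_of_finrank_le hrange_le (by omega)
    have hcompapp : ∀ c : Fin N → ℝ,
        (vecPoly m ∘ₗ θ.mulVecLin) c = ∑ i, ∑ j, (θ i j * c j) • m i := by
      intro c
      simp [vecPoly, Matrix.mulVecLin_apply, mulVec, dotProduct, Finset.sum_smul]
    have hset : {q | ∃ c : Fin N → ℝ, q = ∑ i, ∑ j, (θ i j * c j) • m i}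
        = Set.range (vecPoly m ∘ₗ θ.mulVecLin) := by
      ext q
      constructor
      · rintro ⟨c, rfl⟩
        exact ⟨c, hcompapp c⟩
      · rintro ⟨c, rfl⟩
        exact ⟨c, hcompapp c⟩
    have hPTcomp : vecPoly m ∘ₗ (Pᵀ).mulVecLin = vecPoly p := by
      apply LinearMap.ext
      intro y
      rw [LinearMap.comp_apply, Matrix.mulVecLin_apply]
      exact vecPoly_comp m p P hP y
    rw [hset, ← LinearMap.coe_range, Submodule.span_eq, LinearMap.range_comp, hrange_eq,
      ← LinearMap.range_comp, hPTcomp, vecPoly_range, hp_span]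
  · -- dimension claim
    set L : (symSubmodule r) →ₗ[ℝ] MvPolynomial (Fin n) ℝ :=
      (gramPoly p).comp (symSubmodule r).subtype with hLdef
    set congP : Matrix (Fin r) (Fin r) ℝ →ₗ[ℝ] Matrix (Fin N) (Fin N) ℝ :=
      { toFun := fun A => Pᵀ * A * P
        map_add' := fun A B => by show Pᵀ * (A + B) * P = Pᵀ * A * P + Pᵀ * B * P; rw [Matrix.mul_add, Matrix.add_mul]
        map_smul' := fun c A => by
          simp only [RingHom.id_apply]
          rw [Matrix.mul_smul, Matrix.smul_mul] } with hcongPdef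
    set D : Submodule ℝ (Matrix (Fin r) (Fin r) ℝ) :=
      Submodule.map (symSubmodule r).subtype (LinearMap.ker L) with hDdef
    have hFrep : ∀ G ∈ F, ∃ A : Matrix (Fin r) (Fin r) ℝ,
        Aᵀ = A ∧ gramPoly p A = f ∧ G = Pᵀ * A * P := by
      rintro G ⟨hGG, A, rfl⟩
      rw [hGram'] at hGG
      have hGsym : (Pᵀ * A * P)ᵀ = Pᵀ * A * P := by
        have h := hGG.1.1
        rwa [Matrix.IsHermitian, conjTranspose_eq_transpose_of_trivial] at h
      have hAT : Pᵀ * Aᵀ * P = Pᵀ * A * P := by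
        conv_rhs => rw [← hGsym]
        rw [transpose_mul, transpose_mul, transpose_transpose]
        simp only [Matrix.mul_assoc]
      have hhalf : Pᵀ * ((2⁻¹ : ℝ) • (A + Aᵀ)) * P = Pᵀ * A * P := by
        rw [Matrix.mul_smul, Matrix.smul_mul, Matrix.mul_add, Matrix.add_mul, hAT,
          ← two_smul ℝ (Pᵀ * A * P), smul_smul]
        norm_num
      refine ⟨(2⁻¹ : ℝ) • (A + Aᵀ), ?_, ?_, hhalf.symm⟩
      · rw [transpose_smul, transpose_add, transpose_transpose, add_comm]
      · rw [← hconj, hhalf, hGG.2]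
    have hvs : vectorSpan ℝ F = Submodule.map congP D := by
      apply le_antisymm
      · apply Submodule.span_le.2
        rintro x ⟨g1, hg1, g2, hg2, rfl⟩
        obtain ⟨A1, hA1s, hA1f, rfl⟩ := hFrep g1 hg1
        obtain ⟨A2, hA2s, hA2f, rfl⟩ := hFrep g2 hg2
        refine Submodule.mem_map.2 ⟨A1 - A2, ?_, ?_⟩
        · refine Submodule.mem_map.2 ⟨⟨A1 - A2, by show (A1 - A2)ᵀ = A1 - A2; rw [transpose_sub, hA1s, hA2s]⟩, ?_, rfl⟩
          refine LinearMap.mem_ker.2 ?_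
          show gramPoly p (A1 - A2) = 0
          rw [map_sub, hA1f, hA2f, sub_self]
        · show Pᵀ * (A1 - A2) * P = _
          rw [Matrix.mul_sub, Matrix.sub_mul]
          exact (vsub_eq_sub _ _).symm
      · rintro x ⟨B0, hB0, rfl⟩
        obtain ⟨b, hbk, rfl⟩ := hB0
        have hBsym : ((b : Matrix (Fin r) (Fin r) ℝ))ᵀ = (b : Matrix (Fin r) (Fin r) ℝ) := b.2
        have hBker : gramPoly p (b : Matrix (Fin r) (Fin r) ℝ) = 0 := LinearMap.mem_ker.1 hbk
        set B : Matrix (Fin r) (Fin r) ℝ := (b : Matrix (Fin r) (Fin r) ℝ) with hBdef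
        set c : ℝ := ∑ k, ∑ l, |B k l| with hcdef
        have hc0 : 0 ≤ c :=
          Finset.sum_nonneg fun k _ => Finset.sum_nonneg fun l _ => abs_nonneg _
        set ε : ℝ := (c + 1)⁻¹ with hεdef
        have hε : 0 < ε := by positivity
        have hεc : ε * c = 1 - ε := by
          rw [hεdef]
          field_simp
          ring
        have hquad : ∀ v : Fin r → ℝ, |v ⬝ᵥ B *ᵥ v| ≤ c * (v ⬝ᵥ v) := by
          intro v
          have hv2 : ∀ k, v k * v k ≤ v ⬝ᵥ v := fun k =>
            Finset.single_le_sum (f := fun i => v i * v i)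
              (fun i _ => mul_self_nonneg _) (Finset.mem_univ k)
          have hvv : 0 ≤ v ⬝ᵥ v := Finset.sum_nonneg fun i _ => mul_self_nonneg _
          have hstep : |v ⬝ᵥ B *ᵥ v| = |∑ k, ∑ l, v k * (B k l * v l)| := by
            simp [dotProduct, mulVec, Finset.mul_sum]
          rw [hstep]
          calc |∑ k, ∑ l, v k * (B k l * v l)|
              ≤ ∑ k, |∑ l, v k * (B k l * v l)| := Finset.abs_sum_le_sum_abs _ _
            _ ≤ ∑ k, ∑ l, |v k * (B k l * v l)| :=
                Finset.sum_le_sum fun k _ => Finset.abs_sum_le_sum_abs _ _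
            _ ≤ ∑ k, ∑ l, |B k l| * (v ⬝ᵥ v) := by
                refine Finset.sum_le_sum fun k _ => Finset.sum_le_sum fun l _ => ?_
                have h1 : |v k * (B k l * v l)| = |B k l| * |v k * v l| := by
                  rw [abs_mul, abs_mul, abs_mul]
                  ring
                rw [h1]
                refine mul_le_mul_of_nonneg_left ?_ (abs_nonneg _)
                have habs : |v k * v l| ≤ (v k * v k + v l * v l)/2 := by
                  rw [abs_mul]
                  nlinarith [sq_nonneg (|v k| - |v l|), abs_nonneg (v k), abs_nonneg (v l),
                    sq_abs (v k), sq_abs (v l), abs_mul_abs_self (v k), abs_mul_abs_self (v l)]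
                have h2 := hv2 k
                have h3 := hv2 l
                linarith
            _ = c * (v ⬝ᵥ v) := by
                rw [hcdef, Finset.sum_mul]
                exact Finset.sum_congr rfl fun k _ => by rw [Finset.sum_mul]
        have hPSD1 : ((1 : Matrix (Fin r) (Fin r) ℝ) + ε • B).PosSemidef := by
          refine PosSemidef.of_dotProduct_mulVec_nonneg ?_ ?_
          · rw [Matrix.IsHermitian, conjTranspose_eq_transpose_of_trivial, transpose_add,
              transpose_one, transpose_smul, hBsym]
          · intro v
            rw [star_trivial, add_mulVec, one_mulVec, dotProduct_add, smul_mulVec,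
              dotProduct_smul]
            have h2 := hquad v
            have h3 : 0 ≤ v ⬝ᵥ v := Finset.sum_nonneg fun i _ => mul_self_nonneg _
            have h4 := (abs_le.1 h2).1
            have h5 : ε * (-(c * (v ⬝ᵥ v))) ≤ ε * (v ⬝ᵥ B *ᵥ v) :=
              mul_le_mul_of_nonneg_left h4 hε.le
            have h6 : 0 ≤ ε * (v ⬝ᵥ v) := mul_nonneg hε.le h3
            rw [smul_eq_mul]
            nlinarith
        have hG1 : Pᵀ * ((1 : Matrix (Fin r) (Fin r) ℝ) + ε • B) * P ∈ F := by
          refine ⟨?_, ⟨_, rfl⟩⟩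
          rw [hGram']
          constructor
          · have h := hPSD1.mul_mul_conjTranspose_same Pᵀ
            rwa [hPH] at h
          · rw [hconj, map_add, LinearMap.map_smul, hone, hBker, smul_zero, add_zero]
        have hdiff : Pᵀ * ((1 : Matrix (Fin r) (Fin r) ℝ) + ε • B) * P
            - Pᵀ * (1 : Matrix (Fin r) (Fin r) ℝ) * P = ε • (Pᵀ * B * P) := by
          rw [Matrix.mul_add, Matrix.add_mul, Matrix.mul_smul, Matrix.smul_mul,
            add_sub_cancel_left]
        have hmem := vsub_mem_vectorSpan (k := ℝ) hG1 hG0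
        rw [vsub_eq_sub, hdiff] at hmem
        have hmem2 := Submodule.smul_mem (vectorSpan ℝ F) ε⁻¹ hmem
        rw [smul_smul, inv_mul_cancel₀ (ne_of_gt hε), one_smul] at hmem2
        exact hmem2
    have hinj : Function.Injective congP := fun A B h => hcong_inj A B h
    have hfr1 : Module.finrank ℝ (Submodule.map congP D) = Module.finrank ℝ D :=
      ((Submodule.equivMapOfInjective congP hinj D).finrank_eq).symm
    have hfr2 : Module.finrank ℝ D = Module.finrank ℝ (LinearMap.ker L) :=
      ((Submodule.equivMapOfInjective _ (Submodule.injective_subtype _)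
        (LinearMap.ker L)).finrank_eq).symm
    have hrangeL : LinearMap.range L = W2 := by
      apply le_antisymm
      · rintro q ⟨⟨A, hAs⟩, rfl⟩
        show gramPoly p A ∈ W2
        rw [gramPoly_apply]
        refine Submodule.sum_mem _ fun k _ => Submodule.sum_mem _ fun l _ => ?_
        rw [← smul_eq_C_mul]
        refine Submodule.smul_mem _ _ ?_
        rw [hW2]
        exact Submodule.subset_span ⟨p k, hpW k, p l, hpW l, rfl⟩
      · rw [hW2, Submodule.span_le]
        rintro q ⟨u, hu, v, hv, rfl⟩
        rw [← hp_span] at hu hv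
        obtain ⟨a, ha⟩ := (Submodule.mem_span_range_iff_exists_fun ℝ).1 hu
        obtain ⟨bb, hbb⟩ := (Submodule.mem_span_range_iff_exists_fun ℝ).1 hv
        set A : Matrix (Fin r) (Fin r) ℝ :=
          Matrix.of fun k l => (a k * bb l + a l * bb k)/2 with hAdef
        have hAs : Aᵀ = A := by
          ext k l
          show (a l * bb k + a k * bb l)/2 = (a k * bb l + a l * bb k)/2
          ring
        refine ⟨⟨A, hAs⟩, ?_⟩
        show gramPoly p A = u * v
        rw [gramPoly_apply]
        have h1 : ∀ x y : Fin r → ℝ,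
            ∑ k, ∑ l, (x k * y l) • (p k * p l)
              = (∑ k, x k • p k) * (∑ l, y l • p l) := by
          intro x y
          rw [Finset.sum_mul_sum]
          exact Finset.sum_congr rfl fun k _ => Finset.sum_congr rfl fun l _ =>
            (smul_mul_smul_comm (x k) (p k) (y l) (p l)).symm
        calc ∑ k, ∑ l, C (A k l) * (p k * p l)
            = ∑ k, ∑ l, (2⁻¹ : ℝ) • ((a k * bb l) • (p k * p l)
                + (a l * bb k) • (p k * p l)) := by
              refine Finset.sum_congr rfl fun k _ => Finset.sum_congr rfl fun l _ => ?_
              rw [← smul_eq_C_mul]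
              show ((a k * bb l + a l * bb k)/2) • (p k * p l) = _
              rw [← add_smul, smul_smul]
              congr 1
              ring
          _ = (2⁻¹ : ℝ) • ((∑ k, ∑ l, (a k * bb l) • (p k * p l))
                + ∑ k, ∑ l, (a l * bb k) • (p k * p l)) := by
              simp [Finset.smul_sum, Finset.sum_add_distrib, smul_add]
          _ = u * v := by
              have h2 : ∑ k, ∑ l, (a l * bb k) • (p k * p l)
                  = ∑ k, ∑ l, (a k * bb l) • (p l * p k) := Finset.sum_comm
              have h3 : ∑ k, ∑ l, (a k * bb l) • (p l * p k)
                  = ∑ k, ∑ l, (a k * bb l) • (p k * p l) :=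
                Finset.sum_congr rfl fun k _ => Finset.sum_congr rfl fun l _ => by
                  rw [mul_comm (p l)]
              rw [h2, h3, h1 a bb, ha, hbb, ← two_smul ℝ (u * v), smul_smul]
              norm_num
    have hrn := LinearMap.finrank_range_add_finrank_ker L
    rw [hrangeL, finrank_symSubmodule] at hrn
    rw [hvs, hfr1, hfr2]
    omega
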